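/- Soundness of transducer interaction: for transducers T : A+B and T' : B+C, the trace set of T ∥ T' equals the interaction of the trace sets: ⟦T ∥ T'⟧ = ⟦T⟧ ∥ ⟦T'⟧, where the right-hand side is { t ∈ 𝒫(A+B+C)* | t↾(A+B) ∈ ⟦T⟧ ∧ t↾(B+C) ∈ ⟦T'⟧ }. -/

import Mathlib

/-- A transducer over label alphabet `A`: rounds are subsets of `A`. -/
structure Transducer (A : Type) where
  S : Type
  init : S
  delta : S → Set A → S → Prop

/-- Extension of the transition relation to traces (sequences of rounds). -/
inductive ExtDelta {A : Type} (T : Transducer A) : T.S → List (Set A) → T.S → Prop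
  | nil (q : T.S) : ExtDelta T q [] q
  | snoc {s s'' s' : T.S} {t : List (Set A)} {V : Set A} :
      ExtDelta T s t s'' → T.delta s'' V s' → ExtDelta T s (t ++ [V]) s'

/-- The trace set of a transducer. -/
def traces {A : Type} (T : Transducer A) : Set (List (Set A)) :=
  {t | ∃ s, ExtDelta T T.init t s}

/-- Intersection (synchronized product) of transducers. -/
def inter {A : Type} (T T' : Transducer A) : Transducer A where
  S := T.S × T'.S
  init := (T.init, T'.init)
  delta := fun p V q => T.delta p.1 V q.1 ∧ T'.delta p.2 V q.2

/-- Witness traces reaching a state. -/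
def witnessSet {A : Type} (T : Transducer A) (s : T.S) : Set (List (Set A)) :=
  {t | t ∈ traces T ∧ ExtDelta T T.init t s}

/-- Projection of a trace onto a sub-signature `X`. -/
def projTrace {L : Type} (X : Set L) (t : List (Set L)) : List (Set L) :=
  t.map (fun V => V ∩ X)

/-- Interaction (synchronization on projected rounds) of transducers with
signatures `X` and `Y`. -/
def interactT {L : Type} (X Y : Set L) (T T' : Transducer L) : Transducer L where
  S := T.S × T'.S
  init := (T.init, T'.init)
  delta := fun p V q => V ⊆ X ∪ Y ∧ T.delta p.1 (V ∩ X) q.1 ∧ T'.delta p.2 (V ∩ Y) q.2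

/-- Projection of a transducer onto sub-signature `X`. -/
def projT {L : Type} (X : Set L) (T : Transducer L) : Transducer L where
  S := T.S
  init := T.init
  delta := fun s V s' => ∃ W, V = W ∩ X ∧ T.delta s W s'

/-- Interaction of trace sets over signatures `X` and `Y`. -/
def interactSet {L : Type} (X Y : Set L) (θ θ' : Set (List (Set L))) :
    Set (List (Set L)) :=
  {t | (∀ V ∈ t, V ⊆ X ∪ Y) ∧ projTrace X t ∈ θ ∧ projTrace Y t ∈ θ'}

/-- Composition of a transducer over `A+B` with one over `B+C`. -/
def composeT {L : Type} (A B C : Set L) (T T' : Transducer L) : Transducer L :=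
  projT (A ∪ C) (interactT (A ∪ B) (B ∪ C) T T')

lemma ExtDelta.nil_inv {A : Type} {T : Transducer A} {s s' : T.S}
    (h : ExtDelta T s [] s') : s = s' := by
  generalize hu : ([] : List (Set A)) = u at h
  cases h with
  | nil => rfl
  | snoc h1 h2 => simp_all

lemma ExtDelta.snoc_inv {A : Type} {T : Transducer A} {s s' : T.S}
    {t : List (Set A)} {V : Set A}
    (h : ExtDelta T s (t ++ [V]) s') :
    ∃ s'', ExtDelta T s t s'' ∧ T.delta s'' V s' := by
  generalize hu : t ++ [V] = u at h
  cases h with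
  | nil => simp_all
  | snoc h1 h2 =>
    obtain ⟨ht, hV⟩ := List.append_inj' hu.symm rfl
    obtain rfl := (by simpa using hV : _ = V)
    subst ht
    exact ⟨_, h1, h2⟩

lemma interact_ext {L : Type} (X Y : Set L) (T T' : Transducer L)
    {p q : T.S × T'.S} {t : List (Set L)} :
    ExtDelta (interactT X Y T T') p t q ↔
      (∀ V ∈ t, V ⊆ X ∪ Y) ∧ ExtDelta T p.1 (projTrace X t) q.1 ∧
        ExtDelta T' p.2 (projTrace Y t) q.2 := by
  constructor
  · intro h
    refine ExtDelta.rec (motive := fun (t : List (Set L)) (q : (interactT X Y T T').S) _ =>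
        (∀ V ∈ t, V ⊆ X ∪ Y) ∧ ExtDelta T p.1 (projTrace X t) q.1 ∧
          ExtDelta T' p.2 (projTrace Y t) q.2) ?_ ?_ h
    · exact ⟨by simp, ExtDelta.nil _, ExtDelta.nil _⟩
    · intro s'' s' t V h1 h2 ih
      obtain ⟨hsub, hT, hT'⟩ := ih
      obtain ⟨hVsub, hd1, hd2⟩ := h2
      refine ⟨?_, ?_, ?_⟩
      · intro V hV
        rcases List.mem_append.mp hV with h | h
        · exact hsub V h
        · simp_all
      · simpa [projTrace] using ExtDelta.snoc hT hd1
      · simpa [projTrace] using ExtDelta.snoc hT' hd2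
  · rintro ⟨hsub, hT, hT'⟩
    induction t using List.reverseRecOn generalizing q with
    | nil =>
      have h1 := hT.nil_inv
      have h2 := hT'.nil_inv
      have : q = p := by
        ext <;> simp [← h1, ← h2]
      subst this
      exact ExtDelta.nil _
    | append_singleton ts V ih =>
      rw [show projTrace X (ts ++ [V]) = projTrace X ts ++ [V ∩ X] by simp [projTrace]] at hT
      rw [show projTrace Y (ts ++ [V]) = projTrace Y ts ++ [V ∩ Y] by simp [projTrace]] at hT'
      obtain ⟨s1, h1, d1⟩ := hT.snoc_inv
      obtain ⟨s2, h2, d2⟩ := hT'.snoc_inv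
      have hmid := ih (q := (s1, s2)) (fun V hV => hsub V (by simp [hV])) h1 h2
      exact ExtDelta.snoc hmid ⟨hsub V (by simp), d1, d2⟩

theorem interact_traces {L : Type} (A B C : Set L)
    (T T' : Transducer L) :
    traces (interactT (A ∪ B) (B ∪ C) T T')
      = interactSet (A ∪ B) (B ∪ C) (traces T) (traces T') := by
  ext t
  constructor
  · rintro ⟨s, hs⟩
    obtain ⟨hsub, hT, hT'⟩ := (interact_ext _ _ _ _).mp hs
    exact ⟨hsub, ⟨_, hT⟩, ⟨_, hT'⟩⟩
  · rintro ⟨hsub, ⟨s1, h1⟩, ⟨s2, h2⟩⟩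
    exact ⟨(s1, s2), (interact_ext _ _ _ _).mpr ⟨hsub, h1, h2⟩⟩
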